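/- Let ℓ : ℝ → ℝ satisfy ℓ(z) ≥ 𝟙{z ≥ 0}, ℓ(z) ≥ 0 for all z, and ℓ(z) = 0 whenever z ≤ -z₀ for some fixed z₀ > 0. Let F be a family of predictors f : ℝ^d → ℝ that is closed under the affine transformation f ↦ α(f - β) for all α > 0, β ∈ ℝ (i.e., for any f ∈ F, α > 0, β ∈ ℝ, the function x ↦ α(f(x) - β) is also in F). For a dataset (x_i,y_i)_{i=1}^n with y_i ∈ {-1,1}, the following are equivalent: (1) inf over f ∈ F of (1/n)∑_i ℓ(-y_i f(x_i)) equals 0 and is attained; (2) there exists f ∈ F that classifies all samples correctly, i.e., y_i = sgn(f(x_i)) for all i (with sgn(z)=1 iff z ≥ 0). Moreover, if (2) holds, then every global minimizer f* of the empirical loss over F has zero training error. -/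

import Mathlib

open Classical in
lemma zeroterms_of_correct (d n : ℕ) (ℓ : ℝ → ℝ) (z₀ : ℝ) (hz₀ : 0 < z₀)
    (hℓz : ∀ z : ℝ, z ≤ -z₀ → ℓ z = 0)
    (F : Set ((Fin d → ℝ) → ℝ))
    (hclosed : ∀ f ∈ F, ∀ α : ℝ, 0 < α → ∀ β : ℝ, (fun x => α * (f x - β)) ∈ F)
    (x : Fin n → Fin d → ℝ) (y : Fin n → ℝ) (hy : ∀ i, y i = 1 ∨ y i = -1)
    (f : (Fin d → ℝ) → ℝ) (hf : f ∈ F)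
    (hc : ∀ i, y i = (if 0 ≤ f (x i) then (1 : ℝ) else -1)) :
    ∃ g ∈ F, ∀ i, ℓ (-(y i) * g (x i)) = 0 := by
  rcases isEmpty_or_nonempty (Fin n) with he | hne
  · exact ⟨f, hf, fun i => (he.false i).elim⟩
  · have hne' : (Finset.univ : Finset (Fin n)).Nonempty := Finset.univ_nonempty
    set ε := Finset.univ.inf' hne' (fun i => if y i = 1 then (1:ℝ) else -f (x i)) with hε
    have hεle : ∀ i, ε ≤ (if y i = 1 then (1:ℝ) else -f (x i)) := fun i =>
      Finset.inf'_le _ (Finset.mem_univ i)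
    have hεpos : 0 < ε := by
      rw [hε, Finset.lt_inf'_iff]
      intro i _
      rcases hy i with h1 | h2
      · simp [h1]
      · have hci := hc i
        rw [h2] at hci
        have hfneg : ¬ (0 ≤ f (x i)) := by
          intro h; rw [if_pos h] at hci; norm_num at hci
        push_neg at hfneg
        have : y i ≠ 1 := by rw [h2]; norm_num
        simp only [if_neg this]
        linarith
    have hmargin : ∀ i, ε/2 ≤ y i * (f (x i) - (-(ε/2))) := by
      intro i
      have hli := hεle i
      rcases hy i with h1 | h2
      · have hci := hc i
        rw [h1] at hci
        have hfpos : 0 ≤ f (x i) := by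
          by_contra h; rw [if_neg h] at hci; norm_num at hci
        rw [h1]; nlinarith
      · have : y i ≠ 1 := by rw [h2]; norm_num
        rw [if_neg this] at hli
        rw [h2]; nlinarith
    set α := 2 * z₀ / ε with hα
    have hαpos : 0 < α := by positivity
    refine ⟨fun x => α * (f x - (-(ε/2))), hclosed f hf α hαpos _, fun i => ?_⟩
    apply hℓz
    have h1 : z₀ ≤ α * (y i * (f (x i) - (-(ε/2)))) := by
      have := mul_le_mul_of_nonneg_left (hmargin i) hαpos.le
      have hz : α * (ε/2) = z₀ := by rw [hα]; field_simp [hεpos.ne']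
      linarith
    nlinarith

open Classical in
lemma correct_of_zeroterms (d n : ℕ) (ℓ : ℝ → ℝ)
    (hℓ1 : ∀ z : ℝ, 0 ≤ z → 1 ≤ ℓ z)
    (x : Fin n → Fin d → ℝ) (y : Fin n → ℝ) (hy : ∀ i, y i = 1 ∨ y i = -1)
    (f : (Fin d → ℝ) → ℝ)
    (h0 : ∀ i, ℓ (-(y i) * f (x i)) = 0) :
    ∀ i, y i = (if 0 ≤ f (x i) then (1 : ℝ) else -1) := by
  intro i
  have hpos : 0 < y i * f (x i) := by
    by_contra h
    push_neg at h
    have : (1:ℝ) ≤ ℓ (-(y i) * f (x i)) := hℓ1 _ (by linarith)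
    rw [h0 i] at this; linarith
  rcases hy i with h1 | h2
  · rw [h1] at hpos ⊢
    rw [if_pos (by linarith)]
  · rw [h2] at hpos ⊢
    rw [if_neg (by nlinarith)]

open Classical in
/-- For a surrogate loss that dominates the 0-1 loss, is non-negative, and vanishes
on `(-∞, -z₀]`, and a predictor family closed under positive scaling and shifting:
the minimal empirical loss is zero and attained iff some predictor classifies all
samples correctly; moreover in that case every global minimizer of the empirical
loss has zero training error. -/
theorem zero_loss_iff_zero_error
    (d n : ℕ) (ℓ : ℝ → ℝ) (z₀ : ℝ) (hz₀ : 0 < z₀)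
    (hℓ0 : ∀ z : ℝ, 0 ≤ ℓ z)
    (hℓ1 : ∀ z : ℝ, 0 ≤ z → 1 ≤ ℓ z)
    (hℓz : ∀ z : ℝ, z ≤ -z₀ → ℓ z = 0)
    (F : Set ((Fin d → ℝ) → ℝ))
    (hclosed : ∀ f ∈ F, ∀ α : ℝ, 0 < α → ∀ β : ℝ, (fun x => α * (f x - β)) ∈ F)
    (x : Fin n → Fin d → ℝ) (y : Fin n → ℝ) (hy : ∀ i, y i = 1 ∨ y i = -1) :
    ((∃ f ∈ F, (1 / (n : ℝ)) * ∑ i, ℓ (-(y i) * f (x i)) = 0) ↔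
      (∃ f ∈ F, ∀ i, y i = (if 0 ≤ f (x i) then (1 : ℝ) else -1))) ∧
    ((∃ f ∈ F, ∀ i, y i = (if 0 ≤ f (x i) then (1 : ℝ) else -1)) →
      ∀ fstar ∈ F,
        (∀ g ∈ F, (1 / (n : ℝ)) * ∑ i, ℓ (-(y i) * fstar (x i)) ≤
                  (1 / (n : ℝ)) * ∑ i, ℓ (-(y i) * g (x i))) →
        ∀ i, y i = (if 0 ≤ fstar (x i) then (1 : ℝ) else -1)) := by
  have key : ∀ f : (Fin d → ℝ) → ℝ, (∀ i, ℓ (-(y i) * f (x i)) = 0) →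
      (1/(n:ℝ)) * ∑ i, ℓ (-(y i) * f (x i)) = 0 := by
    intro f h
    rw [Finset.sum_eq_zero (fun i _ => h i), mul_zero]
  have key2 : ∀ f : (Fin d → ℝ) → ℝ, 0 < n →
      (1/(n:ℝ)) * ∑ i, ℓ (-(y i) * f (x i)) = 0 → ∀ i, ℓ (-(y i) * f (x i)) = 0 := by
    intro f hn hsum i
    have hnn : (1/(n:ℝ)) ≠ 0 := by
      have : (0:ℝ) < n := by exact_mod_cast hn
      positivity
    have hS : ∑ i, ℓ (-(y i) * f (x i)) = 0 := (mul_eq_zero.mp hsum).resolve_left hnn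
    exact (Finset.sum_eq_zero_iff_of_nonneg (fun i _ => hℓ0 _)).mp hS i (Finset.mem_univ i)
  constructor
  · constructor
    · rintro ⟨f, hf, hsum⟩
      rcases Nat.eq_zero_or_pos n with hn | hn
      · exact ⟨f, hf, fun i => absurd i.isLt (by omega)⟩
      · exact ⟨f, hf, correct_of_zeroterms d n ℓ hℓ1 x y hy f (key2 f hn hsum)⟩
    · rintro ⟨f, hf, hc⟩
      obtain ⟨g, hg, h0⟩ := zeroterms_of_correct d n ℓ z₀ hz₀ hℓz F hclosed x y hy f hf hc
      exact ⟨g, hg, key g h0⟩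
  · rintro ⟨f, hf, hc⟩ fstar hfs hmin
    rcases Nat.eq_zero_or_pos n with hn | hn
    · exact fun i => absurd i.isLt (by omega)
    · obtain ⟨g, hg, h0⟩ := zeroterms_of_correct d n ℓ z₀ hz₀ hℓz F hclosed x y hy f hf hc
      have hle := hmin g hg
      rw [key g h0] at hle
      have hge : 0 ≤ (1/(n:ℝ)) * ∑ i, ℓ (-(y i) * fstar (x i)) :=
        mul_nonneg (by positivity) (Finset.sum_nonneg fun i _ => hℓ0 _)
      exact correct_of_zeroterms d n ℓ hℓ1 x y hy fstar (key2 fstar hn (le_antisymm hle hge))
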